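/- In a hidden Markov chain model, the entropy of the future partial state sequence satisfies, for every 0 ≤ t ≤ T−2: H(S_t^{T−1} | X = x) = Σ_j P(S_t = j | X = x) { H(S_{t+1}^{T−1} | S_t = j, X_{t+1}^{T−1} = x_{t+1}^{T−1}) − log P(S_t = j | X = x) }, the sum ranging over the states j with P(S_t = j | X = x) > 0. -/

import Mathlib

/-- A hidden Markov chain (HMC) model with `J` states, observation alphabet
`{0, …, V-1}` and sequence length `T`: initial probabilities, transition
probabilities and emission probabilities. -/
structure HMCModel (J V T : ℕ) where
  init : Fin J → ℝ
  trans : Fin J → Fin J → ℝ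
  emit : Fin J → Fin V → ℝ
  init_nonneg : ∀ j, 0 ≤ init j
  init_sum : ∑ j, init j = 1
  trans_nonneg : ∀ i j, 0 ≤ trans i j
  trans_sum : ∀ i, ∑ j, trans i j = 1
  emit_nonneg : ∀ j y, 0 ≤ emit j y
  emit_sum : ∀ j, ∑ y, emit j y = 1

namespace HMCModel

variable {J V T : ℕ} [NeZero J] [NeZero T]

/-- The joint law of the state sequence and the observed sequence:
`P(S = s, X = x) = π_{s_0} b_{s_0}(x_0) ∏_{t=1}^{T-1} p_{s_{t-1} s_t} b_{s_t}(x_t)`. -/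
noncomputable def joint (M : HMCModel J V T) (s : Fin T → Fin J) (x : Fin T → Fin V) : ℝ :=
  M.init (s 0) * M.emit (s 0) (x 0) *
    ∏ t ∈ Finset.univ.filter (fun t : Fin T => t ≠ 0),
      M.trans (s (t - 1)) (s t) * M.emit (s t) (x t)

open Classical in
/-- Probability of an event on (state sequence, observed sequence). -/
noncomputable def pr (M : HMCModel J V T)
    (E : (Fin T → Fin J) → (Fin T → Fin V) → Prop) : ℝ :=
  ∑ s : Fin T → Fin J, ∑ y : Fin T → Fin V, if E s y then M.joint s y else 0

/-- Conditional probability `P(A | B)`; it is `0` when the conditioning event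
has probability zero. -/
noncomputable def cpr (M : HMCModel J V T)
    (A B : (Fin T → Fin J) → (Fin T → Fin V) → Prop) : ℝ :=
  if 0 < M.pr B then M.pr (fun s y => A s y ∧ B s y) / M.pr B else 0

/-- Entropy of the random vector `f(S)` given the event `E`
(natural logarithm, with the convention `0 log 0 = 0`). -/
noncomputable def condEnt (M : HMCModel J V T) {α : Type*} [Fintype α]
    (f : (Fin T → Fin J) → α)
    (E : (Fin T → Fin J) → (Fin T → Fin V) → Prop) : ℝ :=
  -∑ a : α, M.cpr (fun s _ => f s = a) E * Real.log (M.cpr (fun s _ => f s = a) E)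

/-- Entropy of `f(S)` given the random vector `g(S)` and the event `E`:
`H(f(S) | g(S), E) = ∑_c P(g(S) = c | E) H(f(S) | g(S) = c, E)`. -/
noncomputable def condEntGiven (M : HMCModel J V T) {α β : Type*} [Fintype α] [Fintype β]
    (f : (Fin T → Fin J) → α) (g : (Fin T → Fin J) → β)
    (E : (Fin T → Fin J) → (Fin T → Fin V) → Prop) : ℝ :=
  ∑ c : β, M.cpr (fun s _ => g s = c) E * M.condEnt f (fun s y => g s = c ∧ E s y)

/-- The event `X = x`. -/
def obsEq (x : Fin T → Fin V) : (Fin T → Fin J) → (Fin T → Fin V) → Prop :=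
  fun _ y => y = x

/-- The partial state vector `S_0^{t-1}` (coordinates `≥ t` are padded by `0`). -/
def prefixVar (t : ℕ) (s : Fin T → Fin J) : Fin T → Fin J :=
  fun r => if (r : ℕ) < t then s r else 0

/-- The partial state vector `S_t^{T-1}` (coordinates `< t` are padded by `0`). -/
def suffixVar (t : ℕ) (s : Fin T → Fin J) : Fin T → Fin J :=
  fun r => if t ≤ (r : ℕ) then s r else 0

end HMCModel

open HMCModel

open HMCModel Finset
open scoped Classical

namespace HMCAux
set_option linter.unusedSectionVars false
set_option linter.unusedVariables false
set_option maxHeartbeats 1000000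

variable {J V T : ℕ} [NeZero J] [NeZero T]

noncomputable def ind (P : Prop) (u : ℝ) : ℝ := if P then u else 0

lemma ind_pos {P : Prop} (h : P) (u : ℝ) : ind P u = u := by unfold ind; exact if_pos h

lemma ind_neg {P : Prop} (h : ¬P) (u : ℝ) : ind P u = 0 := by unfold ind; exact if_neg h

lemma ind_eq (P : Prop) [Decidable P] (u : ℝ) : (if P then u else 0) = ind P u := by
  by_cases h : P
  · rw [if_pos h, ind_pos h]
  · rw [if_neg h, ind_neg h]

lemma ind_nonneg {P : Prop} {u : ℝ} (h : 0 ≤ u) : 0 ≤ ind P u := by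
  unfold ind; split
  · exact h
  · exact le_refl 0

lemma ind_mul_const (P : Prop) (u c : ℝ) : ind P u * c = ind P (u * c) := by
  by_cases h : P
  · rw [ind_pos h, ind_pos h]
  · rw [ind_neg h, ind_neg h, zero_mul]

lemma ind_congr {P Q : Prop} (h : P ↔ Q) (u : ℝ) : ind P u = ind Q u := by
  by_cases hP : P
  · rw [ind_pos hP, ind_pos (h.mp hP)]
  · rw [ind_neg hP, ind_neg (fun hq => hP (h.mpr hq))]

lemma ind_comp {P : Prop} (φ : ℝ → ℝ) (hφ : φ 0 = 0) (u : ℝ) :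
    φ (ind P u) = ind P (φ u) := by
  by_cases h : P
  · rw [ind_pos h, ind_pos h]
  · rw [ind_neg h, ind_neg h, hφ]

lemma sum_ind_filter {α : Type*} [Fintype α] (p : α → Prop) [DecidablePred p] (f : α → ℝ) :
    (∑ a : α, ind (p a) (f a)) = ∑ a ∈ Finset.univ.filter p, f a := by
  rw [Finset.sum_filter]
  exact Finset.sum_congr rfl fun a _ => (ind_eq _ _).symm

lemma sum_ind_of_iff {α : Type*} [Fintype α] (x : α) (P : Prop) (C : α → Prop)
    (h : ∀ y, C y ↔ (P ∧ y = x)) (f : α → ℝ) :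
    (∑ y : α, ind (C y) (f y)) = ind P (f x) := by
  have hterm : ∀ y : α, ind (C y) (f y) = if y = x then ind P (f y) else 0 := by
    intro y
    by_cases hy : y = x
    · by_cases hP : P
      · rw [ind_pos ((h y).mpr ⟨hP, hy⟩), if_pos hy, ind_pos hP]
      · rw [ind_neg (fun hc => hP ((h y).mp hc).1), if_pos hy, ind_neg hP]
    · rw [ind_neg (fun hc => hy ((h y).mp hc).2), if_neg hy]
  rw [Finset.sum_congr rfl (fun y _ => hterm y),
    Finset.sum_ite_eq' Finset.univ x (fun y => ind P (f y))]
  simp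

lemma val_sub_one (r : Fin T) (h : r ≠ 0) : ((r - 1 : Fin T) : ℕ) = (r : ℕ) - 1 := by
  rcases T with _ | n
  · exact absurd rfl (NeZero.ne 0)
  · rw [Fin.coe_sub_one, if_neg h]

lemma ne_zero_of_lt_val {k : ℕ} (r : Fin T) (h : k < (r : ℕ)) : r ≠ 0 := by
  intro h0
  subst h0
  simp [Fin.val_zero] at h

/-- prefix factor of the joint law. -/
noncomputable def pref (M : HMCModel J V T) (k : ℕ) (s : Fin T → Fin J)
    (y : Fin T → Fin V) : ℝ :=
  M.init (s 0) * M.emit (s 0) (y 0) *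
    ∏ r ∈ univ.filter (fun r : Fin T => r ≠ 0 ∧ (r : ℕ) ≤ k),
      M.trans (s (r - 1)) (s r) * M.emit (s r) (y r)

/-- suffix factor of the joint law. -/
noncomputable def suff (M : HMCModel J V T) (k : ℕ) (s : Fin T → Fin J)
    (y : Fin T → Fin V) : ℝ :=
  ∏ r ∈ univ.filter (fun r : Fin T => k < (r : ℕ)),
    M.trans (s (r - 1)) (s r) * M.emit (s r) (y r)

lemma pref_nonneg (M : HMCModel J V T) (k : ℕ) (s : Fin T → Fin J) (y : Fin T → Fin V) :
    0 ≤ pref M k s y := by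
  refine mul_nonneg (mul_nonneg (M.init_nonneg _) (M.emit_nonneg _ _)) ?_
  exact Finset.prod_nonneg fun r _ => mul_nonneg (M.trans_nonneg _ _) (M.emit_nonneg _ _)

lemma suff_nonneg (M : HMCModel J V T) (k : ℕ) (s : Fin T → Fin J) (y : Fin T → Fin V) :
    0 ≤ suff M k s y :=
  Finset.prod_nonneg fun r _ => mul_nonneg (M.trans_nonneg _ _) (M.emit_nonneg _ _)

lemma joint_eq (M : HMCModel J V T) (k : ℕ) (s : Fin T → Fin J) (y : Fin T → Fin V) :
    M.joint s y = pref M k s y * suff M k s y := by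
  unfold HMCModel.joint pref suff
  have hsplit :
      (∏ r ∈ univ.filter (fun r : Fin T => r ≠ 0),
          M.trans (s (r - 1)) (s r) * M.emit (s r) (y r))
        = (∏ r ∈ univ.filter (fun r : Fin T => r ≠ 0 ∧ (r : ℕ) ≤ k),
            M.trans (s (r - 1)) (s r) * M.emit (s r) (y r)) *
          ∏ r ∈ univ.filter (fun r : Fin T => k < (r : ℕ)),
            M.trans (s (r - 1)) (s r) * M.emit (s r) (y r) := by
    rw [← Finset.prod_filter_mul_prod_filter_not (univ.filter (fun r : Fin T => r ≠ 0))
      (fun r => (r : ℕ) ≤ k)]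
    congr 1
    · rw [Finset.filter_filter]
    · rw [Finset.filter_filter]
      refine Finset.prod_congr ?_ fun _ _ => rfl
      apply Finset.filter_congr
      intro r _
      simp only [not_le]
      constructor
      · rintro ⟨-, h2⟩; exact h2
      · intro h; exact ⟨ne_zero_of_lt_val r h, h⟩
  rw [hsplit, ← mul_assoc]

lemma joint_nonneg (M : HMCModel J V T) (s : Fin T → Fin J) (y : Fin T → Fin V) :
    0 ≤ M.joint s y := by
  rw [joint_eq M 0]
  exact mul_nonneg (pref_nonneg _ _ _ _) (suff_nonneg _ _ _ _)

lemma pr_to_ind (M : HMCModel J V T) (E : (Fin T → Fin J) → (Fin T → Fin V) → Prop) :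
    M.pr E = ∑ s : Fin T → Fin J, ∑ y : Fin T → Fin V, ind (E s y) (M.joint s y) := by
  unfold HMCModel.pr
  exact Finset.sum_congr rfl fun s _ => Finset.sum_congr rfl fun y _ => ind_eq _ _

lemma pr_nonneg (M : HMCModel J V T) (E : (Fin T → Fin J) → (Fin T → Fin V) → Prop) :
    0 ≤ M.pr E := by
  rw [pr_to_ind]
  exact Finset.sum_nonneg fun s _ => Finset.sum_nonneg fun y _ =>
    ind_nonneg (joint_nonneg M s y)

lemma pr_congr (M : HMCModel J V T) {E E' : (Fin T → Fin J) → (Fin T → Fin V) → Prop}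
    (h : ∀ s y, E s y ↔ E' s y) : M.pr E = M.pr E' := by
  rw [pr_to_ind, pr_to_ind]
  exact Finset.sum_congr rfl fun s _ => Finset.sum_congr rfl fun y _ =>
    ind_congr (h s y) _

lemma pr_false (M : HMCModel J V T) {E : (Fin T → Fin J) → (Fin T → Fin V) → Prop}
    (h : ∀ s y, ¬ E s y) : M.pr E = 0 := by
  rw [pr_to_ind]
  exact Finset.sum_eq_zero fun s _ => Finset.sum_eq_zero fun y _ => ind_neg (h s y) _

lemma pref_congr (M : HMCModel J V T) (k : ℕ) {s s' : Fin T → Fin J} {y y' : Fin T → Fin V}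
    (hs : ∀ r : Fin T, (r : ℕ) ≤ k → s r = s' r)
    (hy : ∀ r : Fin T, (r : ℕ) ≤ k → y r = y' r) :
    pref M k s y = pref M k s' y' := by
  unfold pref
  have h0 : ((0 : Fin T) : ℕ) ≤ k := by rw [Fin.val_zero]; exact Nat.zero_le k
  rw [hs 0 h0, hy 0 h0]
  congr 1
  apply Finset.prod_congr rfl
  intro r hr
  simp only [Finset.mem_filter] at hr
  obtain ⟨-, hr0, hrk⟩ := hr
  have h1 : ((r - 1 : Fin T) : ℕ) ≤ k := by rw [val_sub_one r hr0]; omega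
  rw [hs _ h1, hs _ hrk, hy _ hrk]

lemma suff_congr (M : HMCModel J V T) (k : ℕ) {s s' : Fin T → Fin J} {y y' : Fin T → Fin V}
    (hs : ∀ r : Fin T, k ≤ (r : ℕ) → s r = s' r)
    (hy : ∀ r : Fin T, k < (r : ℕ) → y r = y' r) :
    suff M k s y = suff M k s' y' := by
  unfold suff
  apply Finset.prod_congr rfl
  intro r hr
  simp only [Finset.mem_filter] at hr
  obtain ⟨-, hrk⟩ := hr
  have hr0 : r ≠ 0 := ne_zero_of_lt_val r hrk
  have h1 : k ≤ ((r - 1 : Fin T) : ℕ) := by rw [val_sub_one r hr0]; omega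
  rw [hs _ h1, hs _ (le_of_lt hrk), hy _ hrk]

section Fixed

variable (M : HMCModel J V T) (x : Fin T → Fin V) (t : Fin T)

/-- numerator event probability for conditioning on `X = x`. -/
noncomputable def Af (j : Fin J) (a : Fin T → Fin J) : ℝ :=
  M.pr fun s y => suffixVar ((t : ℕ) + 1) s = a ∧ (s t = j ∧ obsEq x s y)

/-- numerator event probability for conditioning on the future observations. -/
noncomputable def Bf (j : Fin J) (a : Fin T → Fin J) : ℝ :=
  M.pr fun s y => suffixVar ((t : ℕ) + 1) s = a ∧ (s t = j ∧ ∀ r : Fin T, t < r → y r = x r)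

noncomputable def Ff (j : Fin J) : ℝ :=
  ∑ s : Fin T → Fin J,
    ind (s t = j ∧ (∀ r : Fin T, (t : ℕ) < (r : ℕ) → s r = 0)) (pref M t s x)

noncomputable def Ff' (j : Fin J) : ℝ :=
  ∑ s : Fin T → Fin J, ∑ y : Fin T → Fin V,
    ind ((s t = j ∧ (∀ r : Fin T, (t : ℕ) < (r : ℕ) → s r = 0)) ∧
        (∀ r : Fin T, t < r → y r = x r)) (pref M t s y)

def stf (j : Fin J) (a : Fin T → Fin J) : Fin T → Fin J :=
  fun r => if (r : ℕ) ≤ (t : ℕ) then j else a r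

noncomputable def Gf (j : Fin J) (a : Fin T → Fin J) : ℝ :=
  ind (∀ r : Fin T, (r : ℕ) ≤ (t : ℕ) → a r = 0) (suff M t (stf t j a) x)

lemma Ff_nonneg (j : Fin J) : 0 ≤ Ff M x t j :=
  Finset.sum_nonneg fun s _ => ind_nonneg (pref_nonneg _ _ _ _)

lemma Gf_nonneg (j : Fin J) (a : Fin T → Fin J) : 0 ≤ Gf M x t j a :=
  ind_nonneg (suff_nonneg _ _ _ _)

lemma Ff_le_Ff' (j : Fin J) : Ff M x t j ≤ Ff' M x t j := by
  have h1 : Ff' M x t j = ∑ y : Fin T → Fin V, ∑ s : Fin T → Fin J,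
      ind ((s t = j ∧ (∀ r : Fin T, (t : ℕ) < (r : ℕ) → s r = 0)) ∧
        (∀ r : Fin T, t < r → y r = x r)) (pref M t s y) := by
    unfold Ff'; rw [Finset.sum_comm]
  have h2 : Ff M x t j = ∑ s : Fin T → Fin J,
      ind ((s t = j ∧ (∀ r : Fin T, (t : ℕ) < (r : ℕ) → s r = 0)) ∧
        (∀ r : Fin T, t < r → x r = x r)) (pref M t s x) := by
    unfold Ff
    exact Finset.sum_congr rfl fun s _ =>
      ind_congr (Iff.symm (and_iff_left fun r _ => rfl)) _
  rw [h1, h2]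
  refine Finset.single_le_sum (f := fun y : Fin T → Fin V => ∑ s : Fin T → Fin J,
      ind ((s t = j ∧ (∀ r : Fin T, (t : ℕ) < (r : ℕ) → s r = 0)) ∧
        (∀ r : Fin T, t < r → y r = x r)) (pref M t s y)) ?_ (Finset.mem_univ x)
  intro y _
  exact Finset.sum_nonneg fun s _ => ind_nonneg (pref_nonneg _ _ _ _)

lemma sum_pref_reindex (j : Fin J) (a : Fin T → Fin J)
    (ha : ∀ r : Fin T, (r : ℕ) ≤ (t : ℕ) → a r = 0) (y : Fin T → Fin V) :
    (∑ s : Fin T → Fin J,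
        ind (suffixVar ((t : ℕ) + 1) s = a ∧ s t = j) (pref M t s y))
      = ∑ s : Fin T → Fin J,
          ind (s t = j ∧ (∀ r : Fin T, (t : ℕ) < (r : ℕ) → s r = 0)) (pref M t s y) := by
  rw [sum_ind_filter, sum_ind_filter]
  refine Finset.sum_nbij'
    (fun s => fun r => if (t : ℕ) < (r : ℕ) then 0 else s r)
    (fun s => fun r => if (t : ℕ) < (r : ℕ) then a r else s r)
    ?_ ?_ ?_ ?_ ?_
  · intro s hs
    simp only [Finset.mem_filter, Finset.mem_univ, true_and] at hs ⊢
    obtain ⟨hsuf, hst⟩ := hs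
    constructor
    · rw [if_neg (lt_irrefl _)]; exact hst
    · intro r hr; rw [if_pos hr]
  · intro s hs
    simp only [Finset.mem_filter, Finset.mem_univ, true_and] at hs ⊢
    obtain ⟨hst, hzero⟩ := hs
    constructor
    · funext r
      show (if (t : ℕ) + 1 ≤ (r : ℕ) then (if (t : ℕ) < (r : ℕ) then a r else s r) else 0) = a r
      by_cases hr : (t : ℕ) < (r : ℕ)
      · rw [if_pos (by omega), if_pos hr]
      · rw [if_neg (by omega), ha r (by omega)]
    · rw [if_neg (lt_irrefl _)]; exact hst
  · intro s hs
    simp only [Finset.mem_filter, Finset.mem_univ, true_and] at hs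
    obtain ⟨hsuf, hst⟩ := hs
    funext r
    by_cases hr : (t : ℕ) < (r : ℕ)
    · show (if (t : ℕ) < (r : ℕ) then a r else _) = s r
      rw [if_pos hr]
      have := congrFun hsuf r
      simp only [suffixVar] at this
      rw [if_pos (by omega)] at this
      exact this.symm
    · show (if (t : ℕ) < (r : ℕ) then a r else (if (t : ℕ) < (r : ℕ) then 0 else s r)) = s r
      rw [if_neg hr, if_neg hr]
  · intro s hs
    simp only [Finset.mem_filter, Finset.mem_univ, true_and] at hs
    obtain ⟨hst, hzero⟩ := hs
    funext r
    by_cases hr : (t : ℕ) < (r : ℕ)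
    · show (if (t : ℕ) < (r : ℕ) then 0 else _) = s r
      rw [if_pos hr]
      exact (hzero r hr).symm
    · show (if (t : ℕ) < (r : ℕ) then (0 : Fin J) else (if (t : ℕ) < (r : ℕ) then a r else s r)) = s r
      rw [if_neg hr, if_neg hr]
  · intro s hs
    refine pref_congr M (t : ℕ) (fun r hr => ?_) (fun r _ => rfl)
    show s r = if (t : ℕ) < (r : ℕ) then 0 else s r
    rw [if_neg (by omega)]

lemma suff_on_event (j : Fin J) (a : Fin T → Fin J) {s : Fin T → Fin J} {y : Fin T → Fin V}
    (hsuf : suffixVar ((t : ℕ) + 1) s = a) (hst : s t = j)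
    (hy : ∀ r : Fin T, t < r → y r = x r) :
    suff M t s y = suff M t (stf t j a) x := by
  refine suff_congr M (t : ℕ) (fun r hr => ?_) (fun r hr => hy r (by rwa [Fin.lt_def]))
  rcases Nat.eq_or_lt_of_le hr with h | h
  · have hrt : r = t := Fin.ext h.symm
    rw [hrt, hst]
    show j = stf t j a t
    unfold stf
    rw [if_pos (le_refl _)]
  · have := congrFun hsuf r
    simp only [suffixVar] at this
    rw [if_pos (by omega)] at this
    rw [this]
    show a r = stf t j a r
    unfold stf
    rw [if_neg (by omega)]

lemma Af_eq (j : Fin J) (a : Fin T → Fin J) :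
    Af M x t j a = Ff M x t j * Gf M x t j a := by
  unfold Af
  rw [pr_to_ind]
  have h1 : ∀ s : Fin T → Fin J,
      (∑ y : Fin T → Fin V,
          ind (suffixVar ((t : ℕ) + 1) s = a ∧ (s t = j ∧ obsEq x s y)) (M.joint s y))
        = ind (suffixVar ((t : ℕ) + 1) s = a ∧ s t = j) (M.joint s x) := by
    intro s
    refine sum_ind_of_iff x _ _ (fun y => ?_) _
    unfold obsEq
    tauto
  rw [Finset.sum_congr rfl fun s _ => h1 s]
  by_cases hcond : ∀ r : Fin T, (r : ℕ) ≤ (t : ℕ) → a r = 0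
  · have hG : Gf M x t j a = suff M t (stf t j a) x := ind_pos hcond _
    have h2 : ∀ s : Fin T → Fin J,
        ind (suffixVar ((t : ℕ) + 1) s = a ∧ s t = j) (M.joint s x)
          = ind (suffixVar ((t : ℕ) + 1) s = a ∧ s t = j) (pref M t s x) *
              suff M t (stf t j a) x := by
      intro s
      rw [ind_mul_const]
      by_cases hs : suffixVar ((t : ℕ) + 1) s = a ∧ s t = j
      · rw [ind_pos hs, ind_pos hs, joint_eq M t,
          suff_on_event M x t j a hs.1 hs.2 (fun r _ => rfl)]
      · rw [ind_neg hs, ind_neg hs]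
    rw [Finset.sum_congr rfl fun s _ => h2 s, ← Finset.sum_mul,
      sum_pref_reindex M t j a hcond x, hG]
    rfl
  · have hG : Gf M x t j a = 0 := ind_neg hcond _
    rw [hG, mul_zero]
    refine Finset.sum_eq_zero fun s _ => ind_neg ?_ _
    rintro ⟨hsuf, -⟩
    apply hcond
    intro r hr
    rw [← hsuf]
    show (if (t : ℕ) + 1 ≤ (r : ℕ) then s r else 0) = 0
    rw [if_neg (by omega)]

lemma Bf_eq (j : Fin J) (a : Fin T → Fin J) :
    Bf M x t j a = Ff' M x t j * Gf M x t j a := by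
  unfold Bf
  rw [pr_to_ind]
  by_cases hcond : ∀ r : Fin T, (r : ℕ) ≤ (t : ℕ) → a r = 0
  · have hG : Gf M x t j a = suff M t (stf t j a) x := ind_pos hcond _
    have h2 : ∀ (s : Fin T → Fin J) (y : Fin T → Fin V),
        ind (suffixVar ((t : ℕ) + 1) s = a ∧ (s t = j ∧ ∀ r : Fin T, t < r → y r = x r))
            (M.joint s y)
          = ind ((suffixVar ((t : ℕ) + 1) s = a ∧ s t = j) ∧
                (∀ r : Fin T, t < r → y r = x r)) (pref M t s y) *
              suff M t (stf t j a) x := by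
      intro s y
      rw [ind_mul_const]
      by_cases hs : suffixVar ((t : ℕ) + 1) s = a ∧ (s t = j ∧ ∀ r : Fin T, t < r → y r = x r)
      · rw [ind_pos hs, ind_pos ⟨⟨hs.1, hs.2.1⟩, hs.2.2⟩, joint_eq M t,
          suff_on_event M x t j a hs.1 hs.2.1 hs.2.2]
      · rw [ind_neg hs, ind_neg (fun h => hs ⟨h.1.1, h.1.2, h.2⟩)]
    rw [Finset.sum_congr rfl fun s _ => Finset.sum_congr rfl fun y _ => h2 s y]
    have h3 : ∀ y : Fin T → Fin V,
        (∑ s : Fin T → Fin J,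
            ind ((suffixVar ((t : ℕ) + 1) s = a ∧ s t = j) ∧
              (∀ r : Fin T, t < r → y r = x r)) (pref M t s y))
          = ∑ s : Fin T → Fin J,
              ind ((s t = j ∧ (∀ r : Fin T, (t : ℕ) < (r : ℕ) → s r = 0)) ∧
                  (∀ r : Fin T, t < r → y r = x r)) (pref M t s y) := by
      intro y
      by_cases hy : ∀ r : Fin T, t < r → y r = x r
      · calc (∑ s : Fin T → Fin J,
            ind ((suffixVar ((t : ℕ) + 1) s = a ∧ s t = j) ∧
              (∀ r : Fin T, t < r → y r = x r)) (pref M t s y))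
            = ∑ s : Fin T → Fin J,
                ind (suffixVar ((t : ℕ) + 1) s = a ∧ s t = j) (pref M t s y) :=
              Finset.sum_congr rfl fun s _ => ind_congr (and_iff_left hy) _
          _ = ∑ s : Fin T → Fin J,
                ind (s t = j ∧ (∀ r : Fin T, (t : ℕ) < (r : ℕ) → s r = 0))
                  (pref M t s y) := sum_pref_reindex M t j a hcond y
          _ = _ := (Finset.sum_congr rfl fun s _ =>
              (ind_congr (and_iff_left hy) _)).symm
      · trans (0 : ℝ)
        · exact Finset.sum_eq_zero fun s _ => ind_neg (fun h => hy h.2) _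
        · exact (Finset.sum_eq_zero fun s _ => ind_neg (fun h => hy h.2) _).symm
    calc (∑ s : Fin T → Fin J, ∑ y : Fin T → Fin V,
        ind ((suffixVar ((t : ℕ) + 1) s = a ∧ s t = j) ∧
          (∀ r : Fin T, t < r → y r = x r)) (pref M t s y) * suff M t (stf t j a) x)
        = (∑ s : Fin T → Fin J, ∑ y : Fin T → Fin V,
            ind ((suffixVar ((t : ℕ) + 1) s = a ∧ s t = j) ∧
              (∀ r : Fin T, t < r → y r = x r)) (pref M t s y)) * suff M t (stf t j a) x := by
          rw [Finset.sum_mul]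
          exact Finset.sum_congr rfl fun s _ => (Finset.sum_mul _ _ _).symm
      _ = (∑ y : Fin T → Fin V, ∑ s : Fin T → Fin J,
            ind ((suffixVar ((t : ℕ) + 1) s = a ∧ s t = j) ∧
              (∀ r : Fin T, t < r → y r = x r)) (pref M t s y)) * suff M t (stf t j a) x := by
          rw [Finset.sum_comm]
      _ = (∑ y : Fin T → Fin V, ∑ s : Fin T → Fin J,
            ind ((s t = j ∧ (∀ r : Fin T, (t : ℕ) < (r : ℕ) → s r = 0)) ∧
                (∀ r : Fin T, t < r → y r = x r)) (pref M t s y)) * suff M t (stf t j a) x := by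
          rw [Finset.sum_congr rfl fun y _ => h3 y]
      _ = Ff' M x t j * Gf M x t j a := by rw [hG]; unfold Ff'; rw [Finset.sum_comm]
  · have hG : Gf M x t j a = 0 := ind_neg hcond _
    rw [hG, mul_zero]
    refine Finset.sum_eq_zero fun s _ => Finset.sum_eq_zero fun y _ => ind_neg ?_ _
    rintro ⟨hsuf, -⟩
    apply hcond
    intro r hr
    rw [← hsuf]
    show (if (t : ℕ) + 1 ≤ (r : ℕ) then s r else 0) = 0
    rw [if_neg (by omega)]

lemma sum_Af (j : Fin J) :
    (∑ a : Fin T → Fin J, Af M x t j a) = M.pr (fun s y => s t = j ∧ obsEq x s y) := by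
  unfold Af
  rw [pr_to_ind]
  simp only [pr_to_ind]
  rw [Finset.sum_comm]
  refine Finset.sum_congr rfl fun s _ => ?_
  rw [Finset.sum_comm]
  refine Finset.sum_congr rfl fun y _ => ?_
  exact sum_ind_of_iff (suffixVar ((t : ℕ) + 1) s) _ _
    (fun a => ⟨fun h => ⟨h.2, h.1.symm⟩, fun h => ⟨h.2.symm, h.1⟩⟩) _

lemma sum_Bf (j : Fin J) :
    (∑ a : Fin T → Fin J, Bf M x t j a)
      = M.pr (fun s y => s t = j ∧ ∀ r : Fin T, t < r → y r = x r) := by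
  unfold Bf
  simp only [pr_to_ind]
  rw [Finset.sum_comm]
  refine Finset.sum_congr rfl fun s _ => ?_
  rw [Finset.sum_comm]
  refine Finset.sum_congr rfl fun y _ => ?_
  exact sum_ind_of_iff (suffixVar ((t : ℕ) + 1) s) _ _
    (fun a => ⟨fun h => ⟨h.2, h.1.symm⟩, fun h => ⟨h.2.symm, h.1⟩⟩) _

lemma markov (j : Fin J) (hNj : 0 < M.pr (fun s y => s t = j ∧ obsEq x s y)) :
    M.condEnt (suffixVar ((t : ℕ) + 1)) (fun s y => s t = j ∧ obsEq x s y)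
      = M.condEnt (suffixVar ((t : ℕ) + 1))
          (fun s y => s t = j ∧ ∀ r : Fin T, t < r → y r = x r) := by
  have hsumA : M.pr (fun s y => s t = j ∧ obsEq x s y)
      = Ff M x t j * ∑ a : Fin T → Fin J, Gf M x t j a := by
    rw [← sum_Af, Finset.sum_congr rfl fun a _ => Af_eq M x t j a, ← Finset.mul_sum]
  have hsumB : M.pr (fun s y => s t = j ∧ ∀ r : Fin T, t < r → y r = x r)
      = Ff' M x t j * ∑ a : Fin T → Fin J, Gf M x t j a := by
    rw [← sum_Bf, Finset.sum_congr rfl fun a _ => Bf_eq M x t j a, ← Finset.mul_sum]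
  have hSGnn : 0 ≤ ∑ a : Fin T → Fin J, Gf M x t j a :=
    Finset.sum_nonneg fun a _ => Gf_nonneg M x t j a
  have h0 : 0 < Ff M x t j * ∑ a : Fin T → Fin J, Gf M x t j a := hsumA ▸ hNj
  have hF : 0 < Ff M x t j := by
    rcases (Ff_nonneg M x t j).lt_or_eq with h | h
    · exact h
    · rw [← h, zero_mul] at h0; exact absurd h0 (lt_irrefl 0)
  have hSG : 0 < ∑ a : Fin T → Fin J, Gf M x t j a := by
    rcases hSGnn.lt_or_eq with h | h
    · exact h
    · rw [← h, mul_zero] at h0; exact absurd h0 (lt_irrefl 0)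
  have hF' : 0 < Ff' M x t j := lt_of_lt_of_le hF (Ff_le_Ff' M x t j)
  have hMj : 0 < M.pr (fun s y => s t = j ∧ ∀ r : Fin T, t < r → y r = x r) := by
    rw [hsumB]; exact mul_pos hF' hSG
  unfold HMCModel.condEnt
  congr 1
  apply Finset.sum_congr rfl
  intro a _
  have e1 : M.cpr (fun s _ => suffixVar ((t : ℕ) + 1) s = a) (fun s y => s t = j ∧ obsEq x s y)
      = Gf M x t j a / ∑ a : Fin T → Fin J, Gf M x t j a := by
    unfold HMCModel.cpr
    rw [if_pos hNj]
    have hnum : M.pr (fun s y =>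
        suffixVar ((t : ℕ) + 1) s = a ∧ (s t = j ∧ obsEq x s y))
        = Af M x t j a := rfl
    rw [hnum, Af_eq, hsumA, mul_div_mul_left _ _ (ne_of_gt hF)]
  have e2 : M.cpr (fun s _ => suffixVar ((t : ℕ) + 1) s = a)
      (fun s y => s t = j ∧ ∀ r : Fin T, t < r → y r = x r)
      = Gf M x t j a / ∑ a : Fin T → Fin J, Gf M x t j a := by
    unfold HMCModel.cpr
    rw [if_pos hMj]
    have hnum : M.pr (fun s y =>
        suffixVar ((t : ℕ) + 1) s = a ∧ (s t = j ∧ ∀ r : Fin T, t < r → y r = x r))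
        = Bf M x t j a := rfl
    rw [hnum, Bf_eq, hsumB, mul_div_mul_left _ _ (ne_of_gt hF')]
  rw [e1, e2]

def zaf (a : Fin T → Fin J) : Fin T → Fin J :=
  fun r => if (r : ℕ) ≤ (t : ℕ) then 0 else a r

lemma N_eq (a : Fin T → Fin J) :
    M.pr (fun s y => suffixVar (t : ℕ) s = a ∧ obsEq x s y)
      = ind (∀ r : Fin T, (r : ℕ) < (t : ℕ) → a r = 0)
          (Af M x t (a t) (zaf t a)) := by
  by_cases hc : ∀ r : Fin T, (r : ℕ) < (t : ℕ) → a r = 0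
  · rw [ind_pos hc]
    apply pr_congr
    intro s y
    constructor
    · rintro ⟨hsuf, hy⟩
      refine ⟨?_, ?_, hy⟩
      · funext r
        show (if (t : ℕ) + 1 ≤ (r : ℕ) then s r else 0) = zaf t a r
        unfold zaf
        by_cases hr : (r : ℕ) ≤ (t : ℕ)
        · rw [if_neg (by omega), if_pos hr]
        · rw [if_pos (by omega), if_neg hr]
          have := congrFun hsuf r
          simp only [suffixVar] at this
          rw [if_pos (by omega)] at this
          exact this
      · have := congrFun hsuf t
        simp only [suffixVar] at this
        rw [if_pos (le_refl _)] at this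
        exact this
    · rintro ⟨hsuf, hst, hy⟩
      refine ⟨?_, hy⟩
      funext r
      show (if (t : ℕ) ≤ (r : ℕ) then s r else 0) = a r
      rcases lt_trichotomy ((r : ℕ)) ((t : ℕ)) with h | h | h
      · rw [if_neg (by omega), (hc r h)]
      · have hrt : r = t := Fin.ext h
        rw [if_pos (by omega), hrt, hst]
      · rw [if_pos (by omega)]
        have := congrFun hsuf r
        simp only [suffixVar] at this
        rw [if_pos (by omega)] at this
        rw [this]
        unfold zaf
        rw [if_neg (by omega)]
  · rw [ind_neg hc]
    apply pr_false
    rintro s y ⟨hsuf, -⟩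
    apply hc
    intro r hr
    rw [← hsuf]
    show (if (t : ℕ) ≤ (r : ℕ) then s r else 0) = 0
    rw [if_neg (by omega)]

lemma reindexH (φ : ℝ → ℝ) (hφ : φ 0 = 0) :
    (∑ a : Fin T → Fin J, φ (M.pr (fun s y => suffixVar (t : ℕ) s = a ∧ obsEq x s y)))
      = ∑ j : Fin J, ∑ a : Fin T → Fin J, φ (Af M x t j a) := by
  have h1 : ∀ a : Fin T → Fin J,
      φ (M.pr (fun s y => suffixVar (t : ℕ) s = a ∧ obsEq x s y))
        = ind (∀ r : Fin T, (r : ℕ) < (t : ℕ) → a r = 0)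
            (φ (Af M x t (a t) (zaf t a))) := by
    intro a
    rw [N_eq M x t a, ind_comp φ hφ]
  have h2 : ∀ (j : Fin J) (a : Fin T → Fin J),
      φ (Af M x t j a)
        = ind (∀ r : Fin T, (r : ℕ) ≤ (t : ℕ) → a r = 0) (φ (Af M x t j a)) := by
    intro j a
    by_cases hc : ∀ r : Fin T, (r : ℕ) ≤ (t : ℕ) → a r = 0
    · rw [ind_pos hc]
    · rw [ind_neg hc, Af_eq]
      have hg : Gf M x t j a = 0 := ind_neg hc _
      rw [hg, mul_zero, hφ]
  rw [Finset.sum_congr rfl fun a _ => h1 a,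
    Finset.sum_congr rfl fun j _ => Finset.sum_congr rfl fun a _ => h2 j a]
  rw [sum_ind_filter]
  have hr : (∑ j : Fin J, ∑ a : Fin T → Fin J,
      ind (∀ r : Fin T, (r : ℕ) ≤ (t : ℕ) → a r = 0) (φ (Af M x t j a)))
      = ∑ p ∈ (Finset.univ : Finset (Fin J)) ×ˢ
          (Finset.univ.filter fun a : Fin T → Fin J =>
            ∀ r : Fin T, (r : ℕ) ≤ (t : ℕ) → a r = 0),
          φ (Af M x t p.1 p.2) := by
    rw [Finset.sum_product]
    exact Finset.sum_congr rfl fun j _ => sum_ind_filter _ _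
  rw [hr]
  refine Finset.sum_nbij'
    (fun a => ((a t, zaf t a) : Fin J × (Fin T → Fin J)))
    (fun p => fun r => if (r : ℕ) = (t : ℕ) then p.1 else p.2 r)
    ?_ ?_ ?_ ?_ ?_
  · intro a ha
    simp only [Finset.mem_filter, Finset.mem_univ, true_and, Finset.mem_product] at ha ⊢
    intro r hr2
    unfold zaf
    rw [if_pos hr2]
  · intro p hp
    simp only [Finset.mem_filter, Finset.mem_univ, true_and, Finset.mem_product] at hp ⊢
    intro r hr2
    show (if (r : ℕ) = (t : ℕ) then p.1 else p.2 r) = 0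
    rw [if_neg (by omega)]
    exact hp r (by omega)
  · intro a ha
    simp only [Finset.mem_filter, Finset.mem_univ, true_and] at ha
    funext r
    show (if (r : ℕ) = (t : ℕ) then a t else zaf t a r) = a r
    by_cases hr2 : (r : ℕ) = (t : ℕ)
    · rw [if_pos hr2]
      have hrt : r = t := Fin.ext hr2
      rw [hrt]
    · rw [if_neg hr2]
      unfold zaf
      by_cases hr3 : (r : ℕ) ≤ (t : ℕ)
      · rw [if_pos hr3, ha r (by omega)]
      · rw [if_neg hr3]
  · intro p hp
    simp only [Finset.mem_filter, Finset.mem_univ, true_and, Finset.mem_product] at hp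
    show ((fun r : Fin T => if (r : ℕ) = (t : ℕ) then p.1 else p.2 r) t,
        zaf t (fun r : Fin T => if (r : ℕ) = (t : ℕ) then p.1 else p.2 r)) = p
    have h1 : (fun r : Fin T => if (r : ℕ) = (t : ℕ) then p.1 else p.2 r) t = p.1 := by
      show (if (t : ℕ) = (t : ℕ) then p.1 else p.2 t) = p.1
      rw [if_pos rfl]
    have h2 : zaf t (fun r : Fin T => if (r : ℕ) = (t : ℕ) then p.1 else p.2 r) = p.2 := by
      funext r
      unfold zaf
      by_cases hr2 : (r : ℕ) ≤ (t : ℕ)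
      · rw [if_pos hr2, hp r hr2]
      · show (if (r : ℕ) ≤ (t : ℕ) then (0 : Fin J)
            else if (r : ℕ) = (t : ℕ) then p.1 else p.2 r) = p.2 r
        rw [if_neg hr2, if_neg (by omega)]
    rw [h1, h2]
  · intro a ha
    rfl

end Fixed

end HMCAux

open HMCAux

/-- In a hidden Markov chain model, the entropy of the future
partial state sequence satisfies, for every `0 ≤ t ≤ T-2`:
`H(S_t^{T-1} | X = x) = ∑_j P(S_t = j | X = x)
   { H(S_{t+1}^{T-1} | S_t = j, X_{t+1}^{T-1} = x_{t+1}^{T-1}) − log P(S_t = j | X = x) }`,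
the sum ranging over the states `j` with `P(S_t = j | X = x) > 0`. -/
theorem hmc_future_partial_entropy
    {J V T : ℕ} [NeZero J] [NeZero T] (M : HMCModel J V T)
    (x : Fin T → Fin V) (hx : 0 < M.pr (obsEq x))
    (t : Fin T) (ht : (t : ℕ) < T - 1)
    (L : Fin J → ℝ) (hL : ∀ j, L j = M.cpr (fun s _ => s t = j) (obsEq x)) :
    M.condEnt (suffixVar (t : ℕ)) (obsEq x)
      = ∑ j ∈ Finset.univ.filter (fun j : Fin J => 0 < L j),
          L j * (M.condEnt (suffixVar ((t : ℕ) + 1))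
                    (fun s y => s t = j ∧ ∀ r : Fin T, t < r → y r = x r)
                 - Real.log (L j)) := by
  classical
  have hcpr : ∀ a : Fin T → Fin J,
      M.cpr (fun s _ => suffixVar (t : ℕ) s = a) (obsEq x)
        = M.pr (fun s y => suffixVar (t : ℕ) s = a ∧ obsEq x s y) / M.pr (obsEq x) := by
    intro a
    simp only [HMCModel.cpr]
    rw [if_pos hx]
  have hLHS : M.condEnt (suffixVar (t : ℕ)) (obsEq x)
      = -∑ a : Fin T → Fin J,
          (M.pr (fun s y => suffixVar (t : ℕ) s = a ∧ obsEq x s y) / M.pr (obsEq x)) *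
            Real.log
              (M.pr (fun s y => suffixVar (t : ℕ) s = a ∧ obsEq x s y) / M.pr (obsEq x)) := by
    unfold HMCModel.condEnt
    congr 1
    exact Finset.sum_congr rfl fun a _ => by rw [hcpr a]
  have key2 : (∑ a : Fin T → Fin J,
        (M.pr (fun s y => suffixVar (t : ℕ) s = a ∧ obsEq x s y) / M.pr (obsEq x)) *
          Real.log
            (M.pr (fun s y => suffixVar (t : ℕ) s = a ∧ obsEq x s y) / M.pr (obsEq x)))
      = ∑ j : Fin J, ∑ a : Fin T → Fin J,
          (Af M x t j a / M.pr (obsEq x)) * Real.log (Af M x t j a / M.pr (obsEq x)) :=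
    reindexH M x t
      (fun u => (u / M.pr (obsEq x)) * Real.log (u / M.pr (obsEq x))) (by simp)
  rw [hLHS, key2, Finset.sum_filter, ← Finset.sum_neg_distrib]
  refine Finset.sum_congr rfl fun j _ => ?_
  have hLj : L j = M.pr (fun s y => s t = j ∧ obsEq x s y) / M.pr (obsEq x) := by
    rw [hL j]
    simp only [HMCModel.cpr]
    rw [if_pos hx]
  have hNnn : 0 ≤ M.pr (fun s y => s t = j ∧ obsEq x s y) := pr_nonneg _ _
  have hLnn : 0 ≤ L j := by rw [hLj]; exact div_nonneg hNnn (le_of_lt hx)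
  by_cases hj : 0 < L j
  · rw [if_pos hj]
    have hNr : M.pr (fun s y => s t = j ∧ obsEq x s y) = L j * M.pr (obsEq x) := by
      rw [hLj]
      field_simp
    have hNj : 0 < M.pr (fun s y => s t = j ∧ obsEq x s y) := by
      rw [hNr]; exact mul_pos hj hx
    have hq : ∀ a : Fin T → Fin J,
        M.cpr (fun s _ => suffixVar ((t : ℕ) + 1) s = a) (fun s y => s t = j ∧ obsEq x s y)
          = Af M x t j a / M.pr (fun s y => s t = j ∧ obsEq x s y) := by
      intro a
      simp only [HMCModel.cpr]
      rw [if_pos hNj]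
      rfl
    have hsum1 : (∑ a : Fin T → Fin J,
        Af M x t j a / M.pr (fun s y => s t = j ∧ obsEq x s y)) = 1 := by
      rw [← Finset.sum_div, sum_Af M x t j, div_self (ne_of_gt hNj)]
    have hH : M.condEnt (suffixVar ((t : ℕ) + 1)) (fun s y => s t = j ∧ obsEq x s y)
        = -∑ a : Fin T → Fin J,
            (Af M x t j a / M.pr (fun s y => s t = j ∧ obsEq x s y)) *
              Real.log (Af M x t j a / M.pr (fun s y => s t = j ∧ obsEq x s y)) := by
      unfold HMCModel.condEnt
      congr 1
      exact Finset.sum_congr rfl fun a _ => by rw [hq a]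
    have hterm : ∀ a : Fin T → Fin J,
        (Af M x t j a / M.pr (obsEq x)) * Real.log (Af M x t j a / M.pr (obsEq x))
          = L j * ((Af M x t j a / M.pr (fun s y => s t = j ∧ obsEq x s y)) *
                Real.log (Af M x t j a / M.pr (fun s y => s t = j ∧ obsEq x s y)))
            + (Af M x t j a / M.pr (fun s y => s t = j ∧ obsEq x s y)) *
                (L j * Real.log (L j)) := by
      intro a
      have hA : 0 ≤ Af M x t j a := by unfold Af; exact pr_nonneg _ _
      have hPxrw : Af M x t j a / M.pr (obsEq x)
          = L j * (Af M x t j a / M.pr (fun s y => s t = j ∧ obsEq x s y)) := by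
        rw [hNr]
        field_simp
      by_cases hA0 : Af M x t j a = 0
      · rw [hA0]
        simp
      · have hq0 : 0 < Af M x t j a / M.pr (fun s y => s t = j ∧ obsEq x s y) :=
          div_pos (lt_of_le_of_ne hA (Ne.symm hA0)) hNj
        rw [hPxrw, Real.log_mul (ne_of_gt hj) (ne_of_gt hq0)]
        ring
    rw [Finset.sum_congr rfl fun a _ => hterm a, Finset.sum_add_distrib,
      ← Finset.mul_sum, ← Finset.sum_mul, hsum1, one_mul,
      ← markov M x t j hNj, hH]
    ring
  · rw [if_neg hj]
    have hL0 : L j = 0 := le_antisymm (not_lt.mp hj) hLnn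
    have hN0 : M.pr (fun s y => s t = j ∧ obsEq x s y) = 0 := by
      have h2 := hLj
      rw [hL0, eq_comm, div_eq_iff (ne_of_gt hx), zero_mul] at h2
      exact h2
    have hAf0 : ∀ a : Fin T → Fin J, Af M x t j a = 0 := by
      intro a
      have hnn : ∀ a ∈ (Finset.univ : Finset (Fin T → Fin J)), 0 ≤ Af M x t j a :=
        fun a _ => by unfold Af; exact pr_nonneg _ _
      have hsum : (∑ a : Fin T → Fin J, Af M x t j a) = 0 := by
        rw [sum_Af M x t j]; exact hN0
      exact (Finset.sum_eq_zero_iff_of_nonneg hnn).mp hsum a (Finset.mem_univ a)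
    rw [Finset.sum_eq_zero fun a _ => by rw [hAf0 a]; simp, neg_zero]
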